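/- Let RS be any reachable state of the automaton A(G). If some reminder pair R_i of RS has R_i.Followup = ∅, then (R_i.Current, ∅) is the last reminder pair of RS. -/

import Mathlib

/-- The list of variable occurrences (in order) in the right-hand side of a rule. -/
def ruleVars {T N : Type*} (r : ContextFreeRule T N) : List N :=
  r.output.filterMap (fun s => match s with
    | Symbol.nonterminal B => some B
    | _ => none)

/-- The word `w₀w₁⋯w_r` of terminals (in order) in the right-hand side of a rule. -/
def ruleTerms {T N : Type*} (r : ContextFreeRule T N) : List T :=
  r.output.filterMap (fun s => match s with
    | Symbol.terminal a => some a
    | _ => none)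

/-- A reminder pair: a `Current` component in `V ∪ {⊥}` (modelled as `Option`,
with `none` playing the role of `⊥`) and a `Followup` multiset over the variables. -/
abbrev RPair {T : Type*} (g : ContextFreeGrammar T) : Type _ :=
  Option g.NT × Multiset g.NT

/-- A reminder sequence: a finite sequence of reminder pairs. -/
abbrev RSeq {T : Type*} (g : ContextFreeGrammar T) : Type _ := List (RPair g)

/-- The five transition rules of the automaton `A(G)`; a transition reads a word
over the terminals. -/
inductive Step {T : Type*} (g : ContextFreeGrammar T) [DecidableEq g.NT] :
    RSeq g → List T → RSeq g → Prop where
  /-- (1) `RS·(A,∅) ⟹ RS·(A_j, ⟦A₁,…,A_r⟧ ⊖ ⟦A_j⟧)` reading `w₀w₁⋯w_r`,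
  for a production `A → w₀A₁w₁⋯A_r w_r` with `r ≥ 1`. -/
  | ext (RS : RSeq g) (r : ContextFreeRule T g.NT) (hr : r ∈ g.rules)
      (Aj : g.NT) (hAj : Aj ∈ ruleVars r) :
      Step g (RS ++ [(some r.input, 0)]) (ruleTerms r)
        (RS ++ [(some Aj, (ruleVars r : Multiset g.NT).erase Aj)])
  /-- (2) `RS·(A,v) ⟹ RS·(A,v)·(A_j, ⟦A₁,…,A_r⟧ ⊖ ⟦A_j⟧)` when `v ≠ ∅`. -/
  | extNe (RS : RSeq g) (r : ContextFreeRule T g.NT) (hr : r ∈ g.rules)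
      (v : Multiset g.NT) (hv : v ≠ 0) (Aj : g.NT) (hAj : Aj ∈ ruleVars r) :
      Step g (RS ++ [(some r.input, v)]) (ruleTerms r)
        (RS ++ [(some r.input, v), (some Aj, (ruleVars r : Multiset g.NT).erase Aj)])
  /-- (3) `RS·(A,∅) ⟹ RS·(⊥,∅)` reading `w`, for a production `A → w`. -/
  | replE (RS : RSeq g) (r : ContextFreeRule T g.NT) (hr : r ∈ g.rules)
      (hterm : ruleVars r = []) :
      Step g (RS ++ [(some r.input, 0)]) (ruleTerms r) (RS ++ [(none, 0)])
  /-- (4) `RS·(A, v ⊕ ⟦A′⟧) ⟹ RS·(A′, v)` reading `w`, for a production `A → w`. -/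
  | replNe (RS : RSeq g) (r : ContextFreeRule T g.NT) (hr : r ∈ g.rules)
      (hterm : ruleVars r = []) (v : Multiset g.NT) (A' : g.NT) :
      Step g (RS ++ [(some r.input, v + {A'})]) (ruleTerms r) (RS ++ [(some A', v)])
  /-- (5) `RS·(A, v ⊕ ⟦A′⟧)·(⊥,∅) ⟹ RS·(A′, v)` reading `ε`. -/
  | shorten (RS : RSeq g) (A : g.NT) (v : Multiset g.NT) (A' : g.NT) :
      Step g (RS ++ [(some A, v + {A'}), (none, 0)]) [] (RS ++ [(some A', v)])

/-- The state constraint of `A(G)`: every variable occurs at most twice (as a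
`Current` component) in the reminder sequence. -/
def Ok {T : Type*} (g : ContextFreeGrammar T) [DecidableEq g.NT] (RS : RSeq g) : Prop :=
  ∀ A : g.NT, (RS.map Prod.fst).count (some A) ≤ 2

/-- Multi-step runs of `A(G)` through states of the automaton, concatenating the
words read. -/
inductive Steps {T : Type*} (g : ContextFreeGrammar T) [DecidableEq g.NT] :
    RSeq g → List T → RSeq g → Prop where
  | refl (RS : RSeq g) (h : Ok g RS) : Steps g RS [] RS
  | tail {RS₁ RS₂ RS₃ : RSeq g} {w w' : List T} (h : Steps g RS₁ w RS₂)
      (hstep : Step g RS₂ w' RS₃) (h3 : Ok g RS₃) : Steps g RS₁ (w ++ w') RS₃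

/-- The initial state `(S, ∅)` of `A(G)`. -/
def start {T : Type*} (g : ContextFreeGrammar T) : RSeq g := [(some g.initial, 0)]

/-- A reminder sequence is a (reachable) state of `A(G)` if it can be reached from
the initial state `(S, ∅)`. -/
def ReachableState {T : Type*} (g : ContextFreeGrammar T) [DecidableEq g.NT]
    (RS : RSeq g) : Prop :=
  ∃ w : List T, Steps g (start g) w RS

/-- `A(G)` accepts the word `w`: it can go from the initial state `(S,∅)` to the
final state `(⊥,∅)` reading `w`. -/
def AutAccepts {T : Type*} (g : ContextFreeGrammar T) [DecidableEq g.NT]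
    (w : List T) : Prop :=
  Steps g (start g) w [(none, 0)]

/-- Auxiliary invariant: all pairs except possibly the last have nonzero followup. -/
private def FInv {T : Type*} (g : ContextFreeGrammar T) (RS : RSeq g) : Prop :=
  ∀ p ∈ RS.dropLast, p.2 ≠ 0

private lemma inv_step {T : Type*} (g : ContextFreeGrammar T) [DecidableEq g.NT]
    {X Y : RSeq g} {w : List T} (h : Step g X w Y) (hX : FInv g X) : FInv g Y := by
  cases h with
  | ext RS r hr Aj hAj =>
    intro p hp
    rw [List.dropLast_concat] at hp
    exact hX p (by rw [List.dropLast_concat]; exact hp)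
  | extNe RS r hr v hv Aj hAj =>
    intro p hp
    have : (RS ++ [(some r.input, v), (some Aj, (ruleVars r : Multiset g.NT).erase Aj)]).dropLast
        = RS ++ [(some r.input, v)] := by
      rw [show (RS ++ [(some r.input, v), (some Aj, (ruleVars r : Multiset g.NT).erase Aj)])
          = (RS ++ [(some r.input, v)]) ++ [(some Aj, (ruleVars r : Multiset g.NT).erase Aj)] by simp,
        List.dropLast_concat]
    rw [this] at hp
    rcases List.mem_append.1 hp with h1 | h1
    · exact hX p (by rw [List.dropLast_concat]; exact h1)
    · simp at h1; subst h1; simpa using hv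
  | replE RS r hr hterm =>
    intro p hp
    rw [List.dropLast_concat] at hp
    exact hX p (by rw [List.dropLast_concat]; exact hp)
  | replNe RS r hr hterm v A' =>
    intro p hp
    rw [List.dropLast_concat] at hp
    exact hX p (by rw [List.dropLast_concat]; exact hp)
  | shorten RS A v A' =>
    intro p hp
    rw [List.dropLast_concat] at hp
    apply hX p
    rw [show (RS ++ [(some A, v + {A'}), (none, (0 : Multiset g.NT))])
        = (RS ++ [(some A, v + {A'})]) ++ [(none, (0 : Multiset g.NT))] by simp,
      List.dropLast_concat]
    exact List.mem_append.2 (Or.inl hp)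

private lemma inv_steps {T : Type*} (g : ContextFreeGrammar T) [DecidableEq g.NT]
    {X Y : RSeq g} {w : List T} (h : Steps g X w Y) (hX : FInv g X) : FInv g Y := by
  induction h with
  | refl => exact hX
  | tail h hstep h3 ih => exact inv_step g hstep ih

/-- In any reachable state `RS` of `A(G)`, a reminder pair with empty `Followup`
can only be the last pair of the sequence. -/
theorem empty_followup_is_last {T : Type*} (g : ContextFreeGrammar T)
    [DecidableEq g.NT] (RS : RSeq g) (hRS : ReachableState g RS) :
    ∀ (i : ℕ) (hi : i < RS.length), (RS.get ⟨i, hi⟩).2 = 0 → i + 1 = RS.length := by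
  obtain ⟨w, hw⟩ := hRS
  have hinv : FInv g RS := inv_steps g hw (by intro p hp; simp [start] at hp)
  intro i hi h0
  by_contra hne
  have hlt : i < RS.dropLast.length := by
    rw [List.length_dropLast]; omega
  have : RS.dropLast.get ⟨i, hlt⟩ ∈ RS.dropLast := List.get_mem _ _
  have heq : RS.dropLast.get ⟨i, hlt⟩ = RS.get ⟨i, hi⟩ := by
    simp [List.get_eq_getElem, List.getElem_dropLast]
  exact hinv _ (heq ▸ this) h0
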